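/- (Convergence rate for ℓ^p-regularisation, low-order source condition.) Let I be a countable index set, U = ℓ²(I), V a real Hilbert space, F : U → V bounded linear, and 1 < p < 2. Let R : U → ℝ ∪ {+∞} be R(u) = (1/p)Σ_{i∈I}|u_i|^p (with R(u) = +∞ if the sum diverges). Let u† ∈ U with R(u†) < +∞ satisfy Fu† = v†, suppose the vector ξ† with components ξ†_i = u†_i·|u†_i|^(p−2) lies in U and satisfies ξ† = (F*F)^ν ω† for some ω† ∈ U and 0 < ν < 1/2, and fix M > 0 and c > 0. Choose α(δ) = c·δ^(2/(1+2ν)). Then there exists C > 0 such that for all δ > 0, every v^δ with ‖v† − v^δ‖ ≤ δ, and every minimiser u_α^δ of T_{α(δ)}(u) = (1/2)‖Fu − v^δ‖² + α(δ)R(u) with ‖u_α^δ − u†‖ ≤ M, one has ‖u_α^δ − u†‖_{ℓ²} ≤ C·δ^(2ν/(1+2ν)). -/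

import Mathlib

open ContinuousLinearMap
open scoped RealInnerProductSpace

noncomputable section

/-- `P` is the fractional power `T ^ ν` of the (positive self-adjoint) operator `T`, defined
via the continuous functional calculus: there is a continuous star-algebra homomorphism from
`C(σ(T), ℝ)` to the bounded operators mapping the identity function to `T` (such a
homomorphism is unique by Stone–Weierstrass), and `P` is the image of (a continuous extension
of) the function `x ↦ x ^ ν`. -/
def IsFractionalPower {W : Type*} [NormedAddCommGroup W] [InnerProductSpace ℝ W]
    [CompleteSpace W] (T : W →L[ℝ] W) (ν : ℝ) (P : W →L[ℝ] W) : Prop :=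
  ∃ Φ : C(spectrum ℝ T, ℝ) →⋆ₐ[ℝ] (W →L[ℝ] W),
    Continuous Φ ∧
    Φ ((ContinuousMap.id ℝ).restrict (spectrum ℝ T)) = T ∧
    ∃ f : C(ℝ, ℝ), (∀ x ∈ spectrum ℝ T, f x = x ^ ν) ∧
      Φ (f.restrict (spectrum ℝ T)) = P

/-- `ξ` is a subgradient of the extended-real-valued functional `R` at `u`:
`R u < +∞` and `R w ≥ R u + ⟪ξ, w - u⟫` for all `w`. -/
def IsSubgradient {U : Type*} [NormedAddCommGroup U] [InnerProductSpace ℝ U]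
    (R : U → EReal) (ξ u : U) : Prop :=
  R u < ⊤ ∧ ∀ w, R u + ((⟪ξ, w - u⟫ : ℝ) : EReal) ≤ R w

/-- Convexity for extended-real-valued functionals. -/
def ErealConvexOn {U : Type*} [NormedAddCommGroup U] [InnerProductSpace ℝ U]
    (R : U → EReal) : Prop :=
  ∀ u w : U, ∀ t : ℝ, 0 ≤ t → t ≤ 1 →
    R (t • u + (1 - t) • w) ≤ ((t : ℝ) : EReal) * R u + (((1 - t : ℝ)) : EReal) * R w

/-- The Bregman distance `D_ξ(w, u) = R w - R u - ⟪ξ, w - u⟫`. -/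
def Breg {U : Type*} [NormedAddCommGroup U] [InnerProductSpace ℝ U]
    (R : U → EReal) (ξ w u : U) : EReal :=
  R w - R u - ((⟪ξ, w - u⟫ : ℝ) : EReal)

/-- The Tikhonov functional `T_α(u) = (1/2)‖F u - v‖² + α R(u)`. -/
def Tik {U V : Type*} [NormedAddCommGroup U] [InnerProductSpace ℝ U]
    [NormedAddCommGroup V] [InnerProductSpace ℝ V]
    (F : U →L[ℝ] V) (R : U → EReal) (α : ℝ) (v : V) (u : U) : EReal :=
  (((1 : ℝ) / 2 * ‖F u - v‖ ^ 2 : ℝ) : EReal) + ((α : ℝ) : EReal) * R u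

open Classical in
/-- The `ℓ^p` regularisation functional `R(u) = (1/p) Σ_i |u_i|^p` on `ℓ²(I)`,
with value `+∞` if the sum diverges. -/
def Rlp {I : Type*} (p : ℝ) (u : lp (fun _ : I => ℝ) 2) : EReal :=
  if Summable fun i => |u i| ^ p then ((1 / p * ∑' i, |u i| ^ p : ℝ) : EReal) else ⊤


/-! ### Auxiliary lemmas -/

section AuxScalar

lemma scalar_interp' {ν ε x : ℝ} (hν0 : 0 < ν) (hν1 : ν < 1/2) (hε : 0 < ε) (hx : 0 ≤ x) :
    x ^ (2*ν) ≤ ε * x + ε ^ (-(2*ν)/(1-2*ν)) := by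
  have h12 : 0 < 1 - 2*ν := by linarith
  set τ : ℝ := ε ^ (-(1/(1-2*ν))) with hτdef
  have hτ : 0 < τ := Real.rpow_pos_of_pos hε _
  rcases le_total x τ with hxτ | hxτ
  · have h1 : x ^ (2*ν) ≤ τ ^ (2*ν) := Real.rpow_le_rpow hx hxτ (by linarith)
    have h2 : τ ^ (2*ν) = ε ^ (-(2*ν)/(1-2*ν)) := by
      rw [hτdef, ← Real.rpow_mul hε.le]
      congr 1
      field_simp
    have h3 : 0 ≤ ε * x := by positivity
    linarith [h1, h2 ▸ h1]
  · have hx0 : 0 < x := lt_of_lt_of_le hτ hxτ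
    have h1 : x ^ (2*ν) = x * x ^ (2*ν - 1) := by
      have h := Real.rpow_add hx0 1 (2*ν-1)
      rw [Real.rpow_one] at h
      rw [show (2*ν) = 1 + (2*ν-1) by ring, h]; ring_nf
    have h2 : x ^ (2*ν - 1) ≤ τ ^ (2*ν - 1) :=
      Real.rpow_le_rpow_of_nonpos hτ hxτ (by linarith)
    have h3 : τ ^ (2*ν - 1) = ε := by
      rw [hτdef, ← Real.rpow_mul hε.le]
      rw [show -(1/(1-2*ν)) * (2*ν-1) = 1 by field_simp; ring]
      exact Real.rpow_one ε
    have h4 : 0 ≤ ε ^ (-(2*ν)/(1-2*ν)) := Real.rpow_nonneg hε.le _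
    calc x ^ (2*ν) = x * x ^ (2*ν-1) := h1
      _ ≤ x * ε := by
          apply mul_le_mul_of_nonneg_left _ hx0.le
          rw [← h3]; exact h2
      _ ≤ ε * x + ε ^ (-(2*ν)/(1-2*ν)) := by linarith [mul_comm x ε]

end AuxScalar

section AuxOperator

variable {W : Type*} [NormedAddCommGroup W] [InnerProductSpace ℝ W] [CompleteSpace W]
variable {V : Type*} [NormedAddCommGroup V] [InnerProductSpace ℝ V] [CompleteSpace V]

lemma spec_nonneg' (F : W →L[ℝ] V) : ∀ x ∈ spectrum ℝ ((adjoint F).comp F), 0 ≤ x := by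
  have hpos : IsPositive ((adjoint F).comp F) := by
    constructor
    · rw [← isSelfAdjoint_iff_isSymmetric, isSelfAdjoint_iff', adjoint_comp, adjoint_adjoint]
    · intro x
      simp only [comp_apply, reApplyInnerSelf]
      rw [adjoint_inner_left]
      exact real_inner_self_nonneg
  exact SpectrumRestricts.nnreal_iff.mp hpos.spectrumRestricts

lemma phi_selfAdjoint' {s : Set ℝ} (Φ : C(s, ℝ) →⋆ₐ[ℝ] (W →L[ℝ] W)) (g : C(s, ℝ)) :
    IsSelfAdjoint (Φ g) := by
  have hst : star g = g := star_trivial g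
  rw [IsSelfAdjoint, ← map_star, hst]

lemma phi_nonneg' {s : Set ℝ} (Φ : C(s, ℝ) →⋆ₐ[ℝ] (W →L[ℝ] W)) (g : C(s, ℝ))
    (hg : ∀ x, 0 ≤ g x) (h : W) : 0 ≤ ⟪Φ g h, h⟫ := by
  set k : C(s, ℝ) := ⟨fun x => Real.sqrt (g x), (Real.continuous_sqrt.comp g.continuous)⟩
  have hk : k * k = g := by
    ext x
    exact Real.mul_self_sqrt (hg x)
  have hcomp : Φ g = (Φ k).comp (Φ k) := by rw [← hk, map_mul]; rfl
  rw [hcomp]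
  have hsa := phi_selfAdjoint' Φ k
  rw [isSelfAdjoint_iff'] at hsa
  calc (0:ℝ) ≤ ⟪Φ k h, Φ k h⟫ := real_inner_self_nonneg
    _ = ⟪(Φ k).comp (Φ k) h, h⟫ := by
        rw [comp_apply]
        nth_rewrite 2 [← hsa]
        rw [adjoint_inner_right]

lemma op_interp' (T : W →L[ℝ] W) (hspec : ∀ x ∈ spectrum ℝ T, 0 ≤ x)
    {ν : ℝ} (hν0 : 0 < ν) (hν1 : ν < 1/2) {P : W →L[ℝ] W}
    (hP : IsFractionalPower T ν P) :
    IsSelfAdjoint P ∧ ∀ ε : ℝ, 0 < ε → ∀ e : W,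
      ‖P e‖^2 ≤ ε * ⟪T e, e⟫ + ε ^ (-(2*ν)/(1-2*ν)) * ‖e‖^2 := by
  obtain ⟨Φ, -, hid, f, hf, hfP⟩ := hP
  have hPsa : IsSelfAdjoint P := by rw [← hfP]; exact phi_selfAdjoint' Φ _
  refine ⟨hPsa, fun ε hε e => ?_⟩
  set cε : ℝ := ε ^ (-(2*ν)/(1-2*ν)) with hcε
  set fr : C(spectrum ℝ T, ℝ) := f.restrict (spectrum ℝ T) with hfr
  set g : C(spectrum ℝ T, ℝ) :=
    ε • ((ContinuousMap.id ℝ).restrict (spectrum ℝ T)) + cε • 1 - fr * fr with hg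
  have hgpos : ∀ x : spectrum ℝ T, 0 ≤ g x := by
    intro x
    have hx0 : 0 ≤ (x : ℝ) := hspec x x.2
    have hfx : f x = (x:ℝ) ^ ν := hf x x.2
    have hfrx : (fr * fr) x = (x:ℝ) ^ (2*ν) := by
      simp only [hfr, ContinuousMap.mul_apply, ContinuousMap.restrict_apply, hfx]
      rcases eq_or_lt_of_le hx0 with h0 | h0
      · rw [← h0, Real.zero_rpow (by linarith), Real.zero_rpow (by linarith), mul_zero]
      · rw [← Real.rpow_add h0]; ring_nf
    have key := scalar_interp' hν0 hν1 hε hx0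
    simp only [hg, ContinuousMap.sub_apply, ContinuousMap.add_apply, ContinuousMap.smul_apply,
      ContinuousMap.one_apply, ContinuousMap.restrict_apply, ContinuousMap.id_apply, smul_eq_mul,
      hfrx]
    linarith [key]
  have hpos := phi_nonneg' Φ g hgpos e
  have hexpand : Φ g = ε • T + cε • (1 : W →L[ℝ] W) - P.comp P := by
    rw [hg]
    rw [map_sub, map_add, map_smul, map_smul, map_one, map_mul, hid, hfP]
    rfl
  rw [hexpand] at hpos
  have h1 : ⟪(ε • T + cε • (1 : W →L[ℝ] W) - P.comp P) e, e⟫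
      = ε * ⟪T e, e⟫ + cε * ⟪e, e⟫ - ⟪P (P e), e⟫ := by
    simp only [sub_apply, add_apply, smul_apply, one_apply, comp_apply,
      inner_sub_left, inner_add_left, inner_smul_left]
    norm_num
  have h3 : ⟪P (P e), e⟫ = ⟪P e, P e⟫ := by
    nth_rewrite 1 [← hPsa.adjoint_eq]
    rw [adjoint_inner_left]
  rw [h1, h3] at hpos
  rw [← real_inner_self_eq_norm_sq, ← real_inner_self_eq_norm_sq]
  linarith [hpos]

lemma T_inner_eq (F : W →L[ℝ] V) (e : W) : ⟪((adjoint F).comp F) e, e⟫ = ‖F e‖^2 := by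
  simp only [comp_apply]
  rw [adjoint_inner_left, real_inner_self_eq_norm_sq]

end AuxOperator

section AuxPointwise
variable {p : ℝ}

lemma rpow_mul_self_eq' {t : ℝ} (ht : 0 ≤ t) (hp : (1:ℝ) < p) :
    |t| ^ (p-2) * t = t ^ (p-1) := by
  rcases eq_or_lt_of_le ht with h0 | h0
  · rw [← h0]
    simp [Real.zero_rpow (show p - 1 ≠ 0 by linarith)]
  · rw [abs_of_pos h0]
    nth_rewrite 2 [← Real.rpow_one t]
    rw [← Real.rpow_add h0]
    ring_nf

lemma D_nonneg_on' {R κ t : ℝ} (hp1 : 1 < p) (hp2 : p < 2) (hR : 0 < R)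
    (hκ : κ = p*(p-1)/2 * R^(p-2)) (ht0 : 0 ≤ t) (htR : t ≤ R) :
    0 ≤ p * |t| ^ (p-2) * t - 2*κ*t := by
  rcases eq_or_lt_of_le ht0 with h0 | h0
  · simp [← h0]
  · rw [mul_assoc, rpow_mul_self_eq' ht0 hp1]
    have h1 : R ^ (p-2) ≤ t ^ (p-2) :=
      Real.rpow_le_rpow_of_nonpos h0 htR (by linarith)
    have h2 : t ^ (p-1) = t ^ (p-2) * t := by
      rw [mul_comm, ← rpow_mul_self_eq' ht0 hp1, abs_of_pos h0]
      ring
    have h3 : 2*κ*t = p*(p-1) * R^(p-2) * t := by rw [hκ]; ring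
    rw [h2, h3]
    have h4 : p*(p-1) * R^(p-2) ≤ p * t^(p-2) := by
      have hp0 : 0 < p := by linarith
      have : (p-1) * R^(p-2) ≤ 1 * t^(p-2) := by
        apply mul_le_mul (by linarith) h1 (Real.rpow_nonneg hR.le _) (by norm_num)
      nlinarith [this]
    nlinarith [h4, h0.le]

lemma mono_aux' {R κ x y : ℝ} (hp1 : 1 < p) (hp2 : p < 2) (hR : 0 < R)
    (hκ : κ = p*(p-1)/2 * R^(p-2)) (hx0 : 0 ≤ x) (hxy : x ≤ y) (hyR : y ≤ R) :
    p * |x| ^ (p-2) * x - 2*κ*x ≤ p * |y| ^ (p-2) * y - 2*κ*y := by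
  rcases eq_or_lt_of_le hxy with h | hlt
  · rw [h]
  · have ex : p * |x| ^ (p-2) * x = p * x ^ (p-1) := by
      rw [mul_assoc, rpow_mul_self_eq' hx0 hp1]
    have ey : p * |y| ^ (p-2) * y = p * y ^ (p-1) := by
      rw [mul_assoc, rpow_mul_self_eq' (hx0.trans hxy) hp1]
    rw [ex, ey]
    have hcont : ContinuousOn (fun t : ℝ => t ^ (p-1)) (Set.Icc x y) := by
      intro t _
      exact (Real.continuousAt_rpow_const t (p-1) (Or.inr (by linarith))).continuousWithinAt
    have hderiv : ∀ t ∈ Set.Ioo x y,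
        HasDerivAt (fun t : ℝ => t ^ (p-1)) ((p-1) * t ^ (p-1-1)) t := by
      intro t ht
      exact Real.hasDerivAt_rpow_const (Or.inl (by nlinarith [ht.1, hx0] : t ≠ 0))
    obtain ⟨c, hc, hceq⟩ := exists_hasDerivAt_eq_slope (fun t : ℝ => t ^ (p-1))
      (fun t => (p-1) * t ^ (p-1-1)) hlt hcont hderiv
    have hc0 : 0 < c := lt_of_le_of_lt hx0 hc.1
    have hcR : c ≤ R := le_trans hc.2.le hyR
    have hbound : (p-1) * R ^ (p-2) ≤ (p-1) * c ^ (p-1-1) := by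
      have : R ^ (p-2) ≤ c ^ (p-2) := Real.rpow_le_rpow_of_nonpos hc0 hcR (by linarith)
      have he : p - 1 - 1 = p - 2 := by ring
      rw [he]
      nlinarith [this]
    have hslope : (p-1) * R ^ (p-2) * (y - x) ≤ y ^ (p-1) - x ^ (p-1) := by
      have h5 : (p-1) * c ^ (p-1-1) = (y ^ (p-1) - x ^ (p-1)) / (y - x) := hceq
      have h6 : 0 < y - x := by linarith
      calc (p-1) * R ^ (p-2) * (y - x) ≤ (p-1) * c ^ (p-1-1) * (y-x) := by nlinarith [hbound]
        _ = y ^ (p-1) - x ^ (p-1) := by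
            rw [h5, div_mul_cancel₀]
            exact sub_ne_zero.mpr (by linarith)
    have hκ2 : 2*κ = p * ((p-1) * R^(p-2)) := by rw [hκ]; ring
    have hp0 : (0:ℝ) < p := by linarith
    nlinarith [hslope]

lemma D_monotoneOn' {R κ : ℝ} (hp1 : 1 < p) (hp2 : p < 2) (hR : 0 < R)
    (hκ : κ = p*(p-1)/2 * R^(p-2)) :
    MonotoneOn (fun t : ℝ => p * |t| ^ (p-2) * t - 2*κ*t) (Set.Icc (-R) R) := by
  have hodd : ∀ t : ℝ, p * |(-t)| ^ (p-2) * (-t) - 2*κ*(-t)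
      = -(p * |t| ^ (p-2) * t - 2*κ*t) := by
    intro t; rw [abs_neg]; ring
  intro x hx y hy hxy
  simp only
  rcases le_or_gt 0 x with hx0 | hx0
  · exact mono_aux' hp1 hp2 hR hκ hx0 hxy hy.2
  · rcases le_or_gt 0 y with hy0 | hy0
    · have h1 : 0 ≤ p * |y| ^ (p-2) * y - 2*κ*y := D_nonneg_on' hp1 hp2 hR hκ hy0 hy.2
      have h2 : p * |x| ^ (p-2) * x - 2*κ*x ≤ 0 := by
        have := D_nonneg_on' hp1 hp2 hR hκ (t := -x) (by linarith) (by linarith [hx.1])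
        rw [hodd x] at this
        linarith
      linarith
    · have := mono_aux' hp1 hp2 hR hκ (x := -y) (y := -x) (by linarith) (by linarith)
        (by linarith [hx.1])
      rw [hodd x, hodd y] at this
      linarith

lemma pointwise_key' (hp1 : 1 < p) (hp2 : p < 2) {R a b : ℝ} (hR : 0 < R)
    (ha : |a| ≤ R) (hb : |b| ≤ R) :
    |b|^p + p * |b|^(p-2) * b * (a-b) + (p*(p-1)/2) * R^(p-2) * (a-b)^2 ≤ |a|^p := by
  set κ : ℝ := p*(p-1)/2 * R^(p-2) with hκ
  set ψ : ℝ → ℝ := fun t => |t| ^ p - κ * t^2 with hψ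
  set D : ℝ → ℝ := fun t => p * |t| ^ (p-2) * t - 2*κ*t with hD
  have hderiv : ∀ t : ℝ, HasDerivAt ψ (D t) t := by
    intro t
    have h1 := hasDerivAt_abs_rpow t hp1
    have h2 : HasDerivAt (fun t : ℝ => κ * t^2) (κ * (2*t)) t := by
      exact (hasDerivAt_pow 2 t).const_mul κ |>.congr_deriv (by push_cast; ring)
    have := h1.sub h2
    exact this.congr_deriv (by ring)
  have hmono := D_monotoneOn' hp1 hp2 hR hκ
  have key : ψ b + D b * (a - b) ≤ ψ a := by
    rcases lt_trichotomy a b with hab | hab | hab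
    · obtain ⟨c, hc, hceq⟩ := exists_hasDerivAt_eq_slope ψ D hab
        (fun t _ => (hderiv t).continuousAt.continuousWithinAt) (fun t _ => hderiv t)
      have hDcb : D c ≤ D b := hmono
        ⟨by linarith [hc.1, abs_le.mp ha], by linarith [hc.2, abs_le.mp hb]⟩
        ⟨(abs_le.mp hb).1, (abs_le.mp hb).2⟩ hc.2.le
      have : ψ b - ψ a = D c * (b - a) := by
        rw [hceq, div_mul_cancel₀]
        exact sub_ne_zero.mpr (by linarith)
      have hprod : 0 ≤ (D b - D c) * (b - a) :=
        mul_nonneg (by linarith) (by linarith)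
      linarith [this, hprod]
    · rw [hab]; simp
    · obtain ⟨c, hc, hceq⟩ := exists_hasDerivAt_eq_slope ψ D hab
        (fun t _ => (hderiv t).continuousAt.continuousWithinAt) (fun t _ => hderiv t)
      have hDbc : D b ≤ D c := hmono ⟨(abs_le.mp hb).1, (abs_le.mp hb).2⟩
        ⟨by linarith [hc.1, abs_le.mp hb], by linarith [hc.2, abs_le.mp ha]⟩ hc.1.le
      have : ψ a - ψ b = D c * (a - b) := by
        rw [hceq, div_mul_cancel₀]
        exact sub_ne_zero.mpr (by linarith)
      have hprod : 0 ≤ (D c - D b) * (a - b) :=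
        mul_nonneg (by linarith) (by linarith)
      linarith [this, hprod]
  simp only [hψ, hD] at key
  linarith [key]

end AuxPointwise

section AuxLp
open scoped ENNReal
variable {I : Type*}

lemma rpow_two_eq_sq' (t : ℝ) : t ^ (2:ℝ) = t^2 := by
  rw [show (2:ℝ) = ((2:ℕ):ℝ) by norm_num, Real.rpow_natCast]

lemma norm_rpow_two_eq_sq' (t : ℝ) : ‖t‖ ^ (2:ℝ) = t^2 := by
  rw [show (2:ℝ) = ((2:ℕ):ℝ) by norm_num, Real.rpow_natCast, Real.norm_eq_abs, sq_abs]

lemma norm_sq_eq_tsum' (x : lp (fun _ : I => ℝ) 2) : ‖x‖^2 = ∑' i, (x i)^2 := by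
  have h := lp.norm_rpow_eq_tsum (p := 2) (by norm_num) x
  have h2 : ((2:ℝ≥0∞)).toReal = (2:ℝ) := by norm_num
  rw [h2] at h
  calc ‖x‖^2 = ‖x‖ ^ (2:ℝ) := (rpow_two_eq_sq' ‖x‖).symm
    _ = ∑' i, ‖x i‖ ^ (2:ℝ) := h
    _ = ∑' i, (x i)^2 := by
        congr 1; ext i
        exact norm_rpow_two_eq_sq' (x i)

lemma summable_sq' (x : lp (fun _ : I => ℝ) 2) : Summable fun i => (x i)^2 := by
  have h := (lp.memℓp x).summable (p := 2) (by norm_num)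
  have h2 : ((2:ℝ≥0∞)).toReal = (2:ℝ) := by norm_num
  rw [h2] at h
  convert h using 2 with i
  exact (norm_rpow_two_eq_sq' (x i)).symm

lemma inner_eq_tsum_mul' (f g : lp (fun _ : I => ℝ) 2) : ⟪f, g⟫ = ∑' i, f i * g i := by
  rw [lp.inner_eq_tsum]
  simp [mul_comm]

lemma summable_mul' (f g : lp (fun _ : I => ℝ) 2) : Summable fun i => f i * g i := by
  have := lp.summable_inner (𝕜 := ℝ) f g
  simpa [mul_comm] using this

lemma sum_key' {p : ℝ} (hp1 : 1 < p) (hp2 : p < 2) (u w ξ : lp (fun _ : I => ℝ) 2)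
    (hu : Summable fun i => |u i|^p) (hw : Summable fun i => |w i|^p)
    (hξ : ∀ i, ξ i = u i * |u i|^(p-2))
    {R : ℝ} (hR : 0 < R) (huR : ∀ i, |u i| ≤ R) (hwR : ∀ i, |w i| ≤ R) :
    (∑' i, |u i|^p) + p * ⟪ξ, w - u⟫ + (p*(p-1)/2) * R^(p-2) * ‖w - u‖^2
      ≤ ∑' i, |w i|^p := by
  have hsub : ∀ i, (w - u : lp (fun _ : I => ℝ) 2) i = w i - u i := by
    intro i
    simp
  have hpt : ∀ i, |u i|^p + p * (ξ i * (w - u : lp (fun _ : I => ℝ) 2) i)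
      + (p*(p-1)/2) * R^(p-2) * ((w - u : lp (fun _ : I => ℝ) 2) i)^2 ≤ |w i|^p := by
    intro i
    have := pointwise_key' hp1 hp2 hR (hwR i) (huR i)
    rw [hsub i, hξ i]
    linarith [this]
  have hSξ : Summable fun i => ξ i * (w - u : lp (fun _ : I => ℝ) 2) i := summable_mul' _ _
  have hSe : Summable fun i => ((w - u : lp (fun _ : I => ℝ) 2) i)^2 := summable_sq' _
  have hLHS : Summable fun i => |u i|^p + p * (ξ i * (w - u : lp (fun _ : I => ℝ) 2) i)
      + (p*(p-1)/2) * R^(p-2) * ((w - u : lp (fun _ : I => ℝ) 2) i)^2 :=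
    (hu.add (hSξ.mul_left p)).add (hSe.mul_left _)
  have htle := Summable.tsum_le_tsum hpt hLHS hw
  rw [Summable.tsum_add (hu.add (hSξ.mul_left p)) (hSe.mul_left _), Summable.tsum_add hu (hSξ.mul_left p),
    tsum_mul_left, tsum_mul_left] at htle
  rw [inner_eq_tsum_mul', norm_sq_eq_tsum']
  exact htle

lemma Rlp_eq_of_summable {p : ℝ} {u : lp (fun _ : I => ℝ) 2}
    (h : Summable fun i => |u i| ^ p) :
    Rlp p u = ((1 / p * ∑' i, |u i| ^ p : ℝ) : EReal) := by
  simp [Rlp, h]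

lemma Rlp_eq_top {p : ℝ} {u : lp (fun _ : I => ℝ) 2}
    (h : ¬ Summable fun i => |u i| ^ p) : Rlp p u = ⊤ := by
  simp [Rlp, h]

end AuxLp

set_option maxHeartbeats 2000000 in
/-- convergence rate for `ℓ^p`-regularisation (`1 < p < 2`) under a low-order
source condition, with `α(δ) = c δ^(2/(1+2ν))`. -/
theorem lp_regularisation_rate {I : Type*} [Countable I]
    {V : Type*} [NormedAddCommGroup V] [InnerProductSpace ℝ V] [CompleteSpace V]
    (p : ℝ) (hp1 : 1 < p) (hp2 : p < 2)
    (F : lp (fun _ : I => ℝ) 2 →L[ℝ] V)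
    (udag : lp (fun _ : I => ℝ) 2) (hfin : Rlp p udag < ⊤)
    (vdag : V) (hud : F udag = vdag)
    (ξdag : lp (fun _ : I => ℝ) 2)
    (hξcomp : ∀ i, ξdag i = udag i * |udag i| ^ (p - 2))
    (ν : ℝ) (hν0 : 0 < ν) (hν1 : ν < 1 / 2)
    (P : lp (fun _ : I => ℝ) 2 →L[ℝ] lp (fun _ : I => ℝ) 2)
    (hP : IsFractionalPower ((adjoint F).comp F) ν P)
    (ωdag : lp (fun _ : I => ℝ) 2) (hsource : ξdag = P ωdag)
    (M c : ℝ) (hM : 0 < M) (hc : 0 < c) :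
    ∃ C : ℝ, 0 < C ∧
      ∀ δ : ℝ, 0 < δ → ∀ vδ : V, ‖vdag - vδ‖ ≤ δ →
        ∀ uαδ : lp (fun _ : I => ℝ) 2,
          (∀ u, Tik F (Rlp p) (c * δ ^ (2 / (1 + 2 * ν))) vδ uαδ
              ≤ Tik F (Rlp p) (c * δ ^ (2 / (1 + 2 * ν))) vδ u) →
          ‖uαδ - udag‖ ≤ M →
          ‖uαδ - udag‖ ≤ C * δ ^ (2 * ν / (1 + 2 * ν)) := by
  classical
  have hp0 : (0:ℝ) < p := by linarith
  -- operator facts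
  obtain ⟨hPsa, hinterp⟩ := op_interp' ((adjoint F).comp F) (spec_nonneg' F) hν0 hν1 hP
  -- summability at udag
  have hudsum : Summable fun i => |udag i| ^ p := by
    by_contra h
    rw [Rlp_eq_top h] at hfin
    exact (lt_irrefl _ hfin)
  -- constants
  set S₀ : ℝ := ‖udag‖ + M with hS₀def
  have hS₀ : 0 < S₀ := by
    have := norm_nonneg udag
    rw [hS₀def]; linarith
  set κ : ℝ := (p-1)/2 * S₀ ^ (p-2) with hκdef
  have hκ : 0 < κ := by
    have h1 : 0 < S₀ ^ (p-2) := Real.rpow_pos_of_pos hS₀ (p-2)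
    rw [hκdef]; nlinarith
  set K : ℝ := 1/(c*κ) + c*‖ωdag‖^2/κ + 2*‖ωdag‖/κ + ‖ωdag‖^2/κ^2 with hKdef
  have hKnn : 0 ≤ K := by
    rw [hKdef]; positivity
  refine ⟨Real.sqrt K + 1, by positivity, ?_⟩
  intro δ hδ vδ hvδ uα hmin hMb
  have h2ν : (0:ℝ) < 1 + 2*ν := by linarith
  have h2ν' : (0:ℝ) < 1 - 2*ν := by linarith
  set α : ℝ := c * δ ^ (2 / (1 + 2 * ν)) with hαdef
  have hαpos : 0 < α := mul_pos hc (Real.rpow_pos_of_pos hδ _)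
  -- extract real minimality
  have hTik := hmin udag
  have huαsum : Summable fun i => |uα i| ^ p := by
    by_contra h
    rw [Tik, Tik, Rlp_eq_top h, Rlp_eq_of_summable hudsum] at hTik
    rw [EReal.coe_mul_top_of_pos hαpos, EReal.add_top_of_ne_bot (EReal.coe_ne_bot _)] at hTik
    rw [← EReal.coe_mul, ← EReal.coe_add] at hTik
    exact (EReal.coe_ne_top _) (top_le_iff.mp hTik)
  set Ru : ℝ := 1/p * ∑' i, |udag i| ^ p with hRu
  set Rw : ℝ := 1/p * ∑' i, |uα i| ^ p with hRw
  have hreal : 1/2 * ‖F uα - vδ‖^2 + α * Rw ≤ 1/2 * ‖F udag - vδ‖^2 + α * Ru := by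
    rw [Tik, Tik, Rlp_eq_of_summable huαsum, Rlp_eq_of_summable hudsum,
      ← EReal.coe_mul, ← EReal.coe_mul, ← EReal.coe_add, ← EReal.coe_add] at hTik
    exact_mod_cast hTik
  -- notation
  set e : lp (fun _ : I => ℝ) 2 := uα - udag with he
  set t : ℝ := ‖F uα - vδ‖ with ht
  have htnn : 0 ≤ t := norm_nonneg _
  have hd : ‖F udag - vδ‖ ≤ δ := by rw [hud]; exact hvδ
  have hd2 : 1/2 * ‖F udag - vδ‖^2 ≤ 1/2 * δ^2 := by
    have := pow_le_pow_left₀ (norm_nonneg (F udag - vδ)) hd 2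
    linarith
  -- Bregman lower bound
  have hbound2 : ∀ i, |udag i| ≤ S₀ := by
    intro i
    have h1 : ‖udag i‖ ≤ ‖udag‖ := lp.norm_apply_le_norm (by norm_num) udag i
    rw [Real.norm_eq_abs] at h1
    rw [hS₀def]; linarith
  have hbound1 : ∀ i, |uα i| ≤ S₀ := by
    intro i
    have h1 : ‖uα i‖ ≤ ‖uα‖ := lp.norm_apply_le_norm (by norm_num) uα i
    rw [Real.norm_eq_abs] at h1
    have h2 : ‖uα‖ ≤ ‖udag‖ + ‖uα - udag‖ := by
      have := norm_sub_norm_le uα udag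
      linarith [abs_le.mp (abs_norm_sub_norm_le uα udag)]
    rw [hS₀def]; linarith [hMb, h2]
  have hbregsum := sum_key' hp1 hp2 udag uα ξdag hudsum huαsum hξcomp hS₀ hbound2 hbound1
  have hbreg : Ru + ⟪ξdag, e⟫ + κ * ‖e‖^2 ≤ Rw := by
    have h' := mul_le_mul_of_nonneg_left hbregsum (show (0:ℝ) ≤ 1/p by positivity)
    have heq : Ru + ⟪ξdag, e⟫ + κ * ‖e‖^2
        = 1/p * ((∑' i, |udag i|^p) + p * ⟪ξdag, uα - udag⟫
          + (p*(p-1)/2) * S₀^(p-2) * ‖uα - udag‖^2) := by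
      rw [hRu, hκdef, he]
      field_simp
    rw [heq, hRw]
    exact h'
  -- the variational inequality
  have hA : 1/2 * t^2 + α * ⟪ξdag, e⟫ + α * κ * ‖e‖^2 ≤ 1/2 * δ^2 := by
    have h1 := mul_le_mul_of_nonneg_left hbreg hαpos.le
    linarith [hreal, hd2, h1]
  -- spectral estimate
  have hinner : ⟪ξdag, e⟫ = ⟪ωdag, P e⟫ := by
    rw [hsource]
    nth_rewrite 1 [← hPsa.adjoint_eq]
    rw [adjoint_inner_left]
  set σ : ℝ := δ ^ (-((1-2*ν)/(1+2*ν))) with hσdef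
  set γ : ℝ := δ ^ (2*ν/(1+2*ν)) with hγdef
  have hσpos : 0 < σ := Real.rpow_pos_of_pos hδ _
  have hγpos : 0 < γ := Real.rpow_pos_of_pos hδ _
  have hσ2 : σ^2 = δ ^ (-(2*(1-2*ν))/(1+2*ν)) := by
    rw [hσdef, sq, ← Real.rpow_add hδ]
    congr 1
    ring
  have hγ2 : γ^2 = δ ^ (2*(2*ν)/(1+2*ν)) := by
    rw [hγdef, sq, ← Real.rpow_add hδ]
    congr 1
    ring
  have hcεeq : (σ^2) ^ (-(2*ν)/(1-2*ν)) = γ^2 := by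
    rw [hσ2, ← Real.rpow_mul hδ.le, hγ2]
    congr 1
    field_simp
  have hPe2 : ‖P e‖^2 ≤ (σ*‖F e‖)^2 + (γ*‖e‖)^2 := by
    have h1 := hinterp (σ^2) (by positivity) e
    rw [hcεeq, T_inner_eq F e] at h1
    calc ‖P e‖^2 ≤ σ^2 * ‖F e‖^2 + γ^2 * ‖e‖^2 := h1
      _ = (σ*‖F e‖)^2 + (γ*‖e‖)^2 := by ring
  have hPe : ‖P e‖ ≤ σ*‖F e‖ + γ*‖e‖ := by
    by_contra hcon
    push_neg at hcon
    have hge : 0 ≤ σ*‖F e‖ + γ*‖e‖ := by positivity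
    have hsq := mul_self_lt_mul_self hge hcon
    have hcross : 0 ≤ (σ*‖F e‖) * (γ*‖e‖) := by positivity
    linarith [hPe2, hcross, hsq]
  have hFe : ‖F e‖ ≤ t + δ := by
    have h1 : F e = (F uα - vδ) - (F udag - vδ) := by
      rw [he, map_sub]
      abel
    rw [h1]
    calc ‖(F uα - vδ) - (F udag - vδ)‖ ≤ ‖F uα - vδ‖ + ‖F udag - vδ‖ := norm_sub_le _ _
      _ ≤ t + δ := by rw [ht]; linarith [hd]
  have hPea : ‖P e‖ ≤ σ*(t+δ) + γ*‖e‖ := by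
    have : σ*‖F e‖ ≤ σ*(t+δ) := mul_le_mul_of_nonneg_left hFe hσpos.le
    linarith [hPe]
  have habs : -⟪ξdag, e⟫ ≤ ‖ωdag‖ * (σ*(t+δ) + γ*‖e‖) := by
    rw [hinner]
    calc -⟪ωdag, P e⟫ ≤ |⟪ωdag, P e⟫| := neg_le_abs _
      _ ≤ ‖ωdag‖ * ‖P e‖ := abs_real_inner_le_norm _ _
      _ ≤ ‖ωdag‖ * (σ*(t+δ) + γ*‖e‖) :=
          mul_le_mul_of_nonneg_left hPea (norm_nonneg _)
  -- Young inequalities and combination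
  have hyoung1 : 2*κ*α*‖ωdag‖*σ*t ≤ κ*t^2 + κ*(α*‖ωdag‖*σ)^2 := by
    have h := mul_nonneg hκ.le (sq_nonneg (t - α*‖ωdag‖*σ))
    linarith [h]
  have hyoung2 : 2*κ*α*‖ωdag‖*γ*‖e‖ ≤ α*(κ*‖e‖)^2 + α*(‖ωdag‖*γ)^2 := by
    have h := mul_nonneg hαpos.le (sq_nonneg (κ*‖e‖ - ‖ωdag‖*γ))
    linarith [h]
  have hbig : α*κ^2*‖e‖^2 ≤ κ*δ^2 + κ*α^2*‖ωdag‖^2*σ^2 + 2*κ*α*‖ωdag‖*(σ*δ)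
      + α*‖ωdag‖^2*γ^2 := by
    have hA2 := mul_le_mul_of_nonneg_left hA (by linarith : (0:ℝ) ≤ 2*κ)
    have habs2 := mul_le_mul_of_nonneg_left habs (by positivity : (0:ℝ) ≤ 2*κ*α)
    linarith [hA2, habs2, hyoung1, hyoung2]
  -- rpow identities
  have fact1 : δ^2 = (α * γ^2)/c := by
    have : α * γ^2 = c * δ ^ ((2:ℝ)) := by
      rw [hγ2, hαdef, mul_assoc, ← Real.rpow_add hδ]
      congr 2
      field_simp
    rw [this, mul_div_cancel_left₀ _ (ne_of_gt hc), rpow_two_eq_sq' δ]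
  have fact2 : α * σ^2 = c * γ^2 := by
    rw [hσ2, hγ2, hαdef, mul_assoc, ← Real.rpow_add hδ]
    congr 2
    field_simp
    ring
  have fact3 : σ * δ = γ^2 := by
    have hδ1 : δ = δ ^ (1:ℝ) := (Real.rpow_one δ).symm
    rw [hγ2, hσdef]
    nth_rewrite 2 [hδ1]
    rw [← Real.rpow_add hδ]
    congr 1
    field_simp
    ring
  -- conclude ‖e‖^2 ≤ K * γ^2
  have hKγ : ‖e‖^2 ≤ K * γ^2 := by
    have hrhs : κ*δ^2 + κ*α^2*‖ωdag‖^2*σ^2 + 2*κ*α*‖ωdag‖*(σ*δ) + α*‖ωdag‖^2*γ^2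
        = α*κ^2*(K*γ^2) := by
      rw [fact1, fact3, hKdef]
      have hσ2' : σ^2 = c*γ^2/α := by
        rw [← fact2]
        field_simp
      rw [hσ2']
      field_simp
    rw [hrhs] at hbig
    have := le_of_mul_le_mul_left (by
      calc α*κ^2*‖e‖^2 ≤ α*κ^2*(K*γ^2) := hbig
      ) (by positivity : (0:ℝ) < α*κ^2)
    exact this
  -- final step
  by_contra hcon
  push_neg at hcon
  have h1 : 0 ≤ Real.sqrt K * γ := by positivity
  have h2 : Real.sqrt K * γ < ‖e‖ := by
    have : Real.sqrt K * γ + γ = (Real.sqrt K + 1) * γ := by ring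
    linarith [hcon, hγpos]
  have h3 : (Real.sqrt K * γ)^2 < ‖e‖^2 := by
    have := mul_self_lt_mul_self h1 h2
    rw [pow_two, pow_two]
    exact this
  rw [mul_pow, Real.sq_sqrt hKnn] at h3
  linarith [hKγ]
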